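/- Every finite digraph whose missing graph is a path with 3 edges (P₃) has a vertex v with the second neighborhood property, i.e. |N⁺(v)| ≤ |N⁺⁺(v)|. -/

import Mathlib

/-- First out-neighborhood of `v` in the digraph with arc relation `E`. -/
def Nplus {V : Type*} (E : V → V → Prop) (v : V) : Set V := {u | E v u}

/-- Second out-neighborhood: vertices at directed distance exactly 2 from `v`. -/
def Nplusplus {V : Type*} (E : V → V → Prop) (v : V) : Set V :=
  {u | u ∉ Nplus E v ∧ u ≠ v ∧ ∃ w ∈ Nplus E v, E w u}

/-- `v` has the second neighborhood property. -/
def HasSNP {V : Type*} (E : V → V → Prop) (v : V) : Prop :=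
  (Nplus E v).ncard ≤ (Nplusplus E v).ncard

/-- `{x, y}` is a missing edge of the digraph `E`. -/
def IsMissingEdge {V : Type*} (E : V → V → Prop) (x y : V) : Prop :=
  x ≠ y ∧ ¬ E x y ∧ ¬ E y x

/-- The ordered missing edge `(x₁, y₁)` loses to the ordered missing edge `(x₂, y₂)`. -/
def OLoses {V : Type*} (E : V → V → Prop) (x₁ y₁ x₂ y₂ : V) : Prop :=
  E x₁ x₂ ∧ y₂ ∉ Nplus E x₁ ∪ Nplusplus E x₁ ∧
  E y₁ y₂ ∧ x₂ ∉ Nplus E y₁ ∪ Nplusplus E y₁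

/-- The missing edge `{a, b}` loses to the missing edge `{c, d}`:
some ordering of the endpoints satisfies the ordered losing relation. -/
def Loses {V : Type*} (E : V → V → Prop) (a b c d : V) : Prop :=
  OLoses E a b c d ∨ OLoses E a b d c ∨ OLoses E b a c d ∨ OLoses E b a d c

/-- The missing edge `{a, b}` is good. -/
def Good {V : Type*} (E : V → V → Prop) (a b : V) : Prop :=
  (∀ v, v ≠ a → v ≠ b → E v a → b ∈ Nplus E v ∪ Nplusplus E v) ∨
  (∀ v, v ≠ a → v ≠ b → E v b → a ∈ Nplus E v ∪ Nplusplus E v)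

/-- Arc of the dependency digraph Δ: the missing edge `e` loses to the missing edge `f`. -/
def DeltaArc {V : Type*} (E : V → V → Prop) (e f : Sym2 V) : Prop :=
  ∃ a b c d : V, e = s(a, b) ∧ f = s(c, d) ∧
    IsMissingEdge E a b ∧ IsMissingEdge E c d ∧ OLoses E a b c d

namespace SNPProof
open Classical
variable {V : Type*}
noncomputable def cnt (P : V → Prop) (l : List V) : ℕ := l.countP (fun v => decide (P v))
lemma cnt_cons (P : V → Prop) (x : V) (l : List V) :
    cnt P (x :: l) = cnt P l + (if P x then 1 else 0) := by simp [cnt, List.countP_cons]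
lemma cnt_cons_of (P : V → Prop) {x : V} (hx : P x) (l : List V) :
    cnt P (x :: l) = cnt P l + 1 := by simp [cnt_cons, hx]
lemma cnt_cons_of_not (P : V → Prop) {x : V} (hx : ¬ P x) (l : List V) :
    cnt P (x :: l) = cnt P l := by simp [cnt_cons, hx]
lemma cnt_append (P : V → Prop) (l₁ l₂ : List V) :
    cnt P (l₁ ++ l₂) = cnt P l₁ + cnt P l₂ := by simp [cnt, List.countP_append]
lemma cnt_perm (P : V → Prop) {l₁ l₂ : List V} (h : l₁.Perm l₂) :
    cnt P l₁ = cnt P l₂ := h.countP_eq _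
lemma cnt_mono_of_imp {P Q : V → Prop} (l : List V) (h : ∀ v ∈ l, P v → Q v) :
    cnt P l ≤ cnt Q l := by
  induction l with
  | nil => simp [cnt]
  | cons x t ih =>
    have ht : cnt P t ≤ cnt Q t := ih (fun v hv => h v (List.mem_cons_of_mem _ hv))
    by_cases hx : P x
    · rw [cnt_cons_of _ hx, cnt_cons_of _ (h x List.mem_cons_self hx)]; omega
    · rw [cnt_cons_of_not _ hx, cnt_cons]; omega
lemma cnt_pos_exists {P : V → Prop} {l : List V} (h : 0 < cnt P l) : ∃ v ∈ l, P v := by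
  obtain ⟨v, hv, hp⟩ := List.countP_pos_iff.mp h
  exact ⟨v, hv, of_decide_eq_true hp⟩
lemma cnt_or_disjoint {P Q : V → Prop} (l : List V) (h : ∀ v, ¬ (P v ∧ Q v)) :
    cnt (fun v => P v ∨ Q v) l = cnt P l + cnt Q l := by
  induction l with
  | nil => simp [cnt]
  | cons x t ih =>
    rw [cnt_cons (fun v => P v ∨ Q v), cnt_cons P, cnt_cons Q, ih]
    by_cases hp : P x
    · have hq : ¬ Q x := fun hq => h x ⟨hp, hq⟩
      simp only [hp, hq, if_true, if_false, true_or]; omega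
    · by_cases hq : Q x <;> simp only [hp, hq, if_true, if_false, false_or] <;> omega
lemma cnt_congr {P Q : V → Prop} (l : List V) (h : ∀ v ∈ l, P v ↔ Q v) :
    cnt P l = cnt Q l :=
  le_antisymm (cnt_mono_of_imp l (fun v hv => (h v hv).mp))
    (cnt_mono_of_imp l (fun v hv => (h v hv).mpr))
lemma cnt_split_mem {P : V → Prop} {W : List V} (hnd : W.Nodup) {w : V} (hw : w ∈ W) :
    cnt P W = cnt (fun v => P v ∧ v ≠ w) W + (if P w then 1 else 0) := by
  induction W with
  | nil => simp at hw
  | cons y t ih =>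
    rcases List.mem_cons.mp hw with heq | hwt
    · subst heq
      have hynot : w ∉ t := (List.nodup_cons.mp hnd).1
      rw [cnt_cons P, cnt_cons (fun v => P v ∧ v ≠ w)]
      have : cnt (fun v => P v ∧ v ≠ w) t = cnt P t :=
        cnt_congr t (fun v hv => ⟨fun h => h.1, fun h => ⟨h, fun he => hynot (he ▸ hv)⟩⟩)
      simp [this]
    · have hyw : y ≠ w := fun he => (List.nodup_cons.mp hnd).1 (he ▸ hwt)
      rw [cnt_cons P, cnt_cons (fun v => P v ∧ v ≠ w), ih (List.nodup_cons.mp hnd).2 hwt]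
      by_cases hy : P y <;> simp [hy, hyw] <;> omega
noncomputable def wt (T : V → V → Prop) : List V → ℕ
  | [] => 0
  | x :: l => cnt (fun v => T x v) l + wt T l
lemma wt_cons (T : V → V → Prop) (x : V) (l : List V) :
    wt T (x :: l) = cnt (fun v => T x v) l + wt T l := rfl
lemma wt_append (T : V → V → Prop) (l₁ l₂ : List V) :
    wt T (l₁ ++ l₂) = wt T l₁ + wt T l₂ + (l₁.map (fun x => cnt (fun v => T x v) l₂)).sum := by
  induction l₁ with
  | nil => simp [wt]
  | cons x t ih =>
    simp only [List.cons_append, wt_cons, ih, cnt_append, List.map_cons, List.sum_cons]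
    ring
lemma perm_move (X Y Z : List V) (u : V) :
    (X ++ Y ++ u :: Z).Perm (X ++ u :: (Y ++ Z)) := by
  rw [List.append_assoc]
  exact (List.perm_middle (a := u) (l₁ := Y) (l₂ := Z)).append_left X
lemma cnt_eq_sum_ite (P : V → Prop) (l : List V) :
    cnt P l = (l.map (fun x => if P x then 1 else 0)).sum := by
  induction l with
  | nil => rfl
  | cons x t ih => rw [cnt_cons, ih]; simp [add_comm]
lemma sum_map_add (f g : V → ℕ) (t : List V) :
    (t.map (fun y => f y + g y)).sum = (t.map f).sum + (t.map g).sum := by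
  induction t with
  | nil => rfl
  | cons y t ih => simp only [List.map_cons, List.sum_cons, ih]; ring
lemma wt_move (T : V → V → Prop) (X Y Z : List V) (u : V) :
    wt T (X ++ Y ++ u :: Z) + cnt (fun v => T u v) Y
      = wt T (X ++ u :: (Y ++ Z)) + cnt (fun v => T v u) Y := by
  have hmapeq : ∀ x : V, cnt (fun v => T x v) (Y ++ u :: Z) = cnt (fun v => T x v) (u :: (Y ++ Z)) :=
    fun x => cnt_perm _ (List.perm_middle (a := u) (l₁ := Y) (l₂ := Z)).symm.symm
  have e1 := wt_append T X (Y ++ u :: Z)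
  have e2 := wt_append T X (u :: (Y ++ Z))
  have hsum : (X.map (fun x => cnt (fun v => T x v) (Y ++ u :: Z))).sum
      = (X.map (fun x => cnt (fun v => T x v) (u :: (Y ++ Z)))).sum := by
    congr 1; exact List.map_congr_left (fun x _ => hmapeq x)
  have core : wt T (Y ++ u :: Z) + cnt (fun v => T u v) Y
      = wt T (u :: (Y ++ Z)) + cnt (fun v => T v u) Y := by
    have hm : (Y.map (fun y => cnt (fun v => T y v) (u :: Z))).sum
        = (Y.map (fun y => cnt (fun v => T y v) Z)).sum + cnt (fun y => T y u) Y := by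
      have h1 : ∀ y : V, cnt (fun v => T y v) (u :: Z)
          = cnt (fun v => T y v) Z + (if T y u then 1 else 0) := by
        intro y; rw [cnt_cons]
      rw [cnt_eq_sum_ite (fun y => T y u) Y]
      calc (Y.map (fun y => cnt (fun v => T y v) (u :: Z))).sum
          = (Y.map (fun y => cnt (fun v => T y v) Z + (if T y u then 1 else 0))).sum := by
            congr 1; exact List.map_congr_left (fun y _ => h1 y)
        _ = _ := sum_map_add _ _ Y
    have c1 := wt_append T Y (u :: Z)
    have c2 := wt_append T Y Z
    have c3 : wt T (u :: Z) = cnt (fun v => T u v) Z + wt T Z := rfl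
    have c4 : wt T (u :: (Y ++ Z)) = cnt (fun v => T u v) (Y ++ Z) + wt T (Y ++ Z) := rfl
    have c5 := cnt_append (fun v => T u v) Y Z
    omega
  rw [List.append_assoc] at *
  omega
lemma exists_first_split {P : V → Prop} {L : List V} (h : ∃ v ∈ L, P v) :
    ∃ W u Z, L = W ++ u :: Z ∧ P u ∧ ∀ w ∈ W, ¬ P w := by
  induction L with
  | nil => simp at h
  | cons x t ih =>
    by_cases hx : P x
    · exact ⟨[], x, t, rfl, hx, by simp⟩
    · obtain ⟨v, hv, hPv⟩ := h
      rcases List.mem_cons.mp hv with rfl | hvt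
      · exact absurd hPv hx
      · obtain ⟨W, u, Z, h1, h2, h3⟩ := ih ⟨v, hvt, hPv⟩
        refine ⟨x :: W, u, Z, by rw [h1]; rfl, h2, ?_⟩
        intro w hw
        rcases List.mem_cons.mp hw with rfl | hw'
        · exact hx
        · exact h3 w hw'
lemma suffix_append_cases {t A B : List V} (h : t.IsSuffix (A ++ B)) :
    t.IsSuffix B ∨ ∃ A', A'.IsSuffix A ∧ A' ≠ [] ∧ t = A' ++ B := by
  induction A with
  | nil => exact Or.inl (by simpa using h)
  | cons a A' ih =>
    rw [List.cons_append, List.suffix_cons_iff] at h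
    rcases h with rfl | h
    · exact Or.inr ⟨a :: A', List.suffix_refl _, by simp, rfl⟩
    · rcases ih h with h1 | ⟨A'', h1, h2, h3⟩
      · exact Or.inl h1
      · exact Or.inr ⟨A'', h1.trans (List.suffix_cons a A'), h2, h3⟩
lemma exists_median [Fintype V] (T : V → V → Prop) :
    ∃ l : List V, l.Perm Finset.univ.toList ∧ ∀ l', l'.Perm l → wt T l' ≤ wt T l := by
  have hne : (Finset.univ.toList (α := V)).permutations.toFinset.Nonempty := by
    refine ⟨Finset.univ.toList, ?_⟩
    rw [List.mem_toFinset, List.mem_permutations]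
  obtain ⟨l, hl, hmax⟩ := Finset.exists_max_image _ (wt T) hne
  rw [List.mem_toFinset, List.mem_permutations] at hl
  refine ⟨l, hl, fun l' hp => hmax l' ?_⟩
  rw [List.mem_toFinset, List.mem_permutations]
  exact hp.trans hl

lemma cnt_eq_card_of_nodup (P : V → Prop) [DecidableEq V] :
    ∀ (l : List V), l.Nodup → cnt P l = (l.toFinset.filter P).card := by
  intro l
  induction l with
  | nil => intro _; simp [cnt]
  | cons x t ih =>
    intro hnd
    obtain ⟨hxt, hndt⟩ := List.nodup_cons.mp hnd
    rw [cnt_cons, ih hndt, List.toFinset_cons, Finset.filter_insert]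
    by_cases hP : P x
    · rw [if_pos hP, if_pos hP, Finset.card_insert_of_notMem (by simp [hxt])]
    · rw [if_neg hP, if_neg hP, add_zero]

lemma cnt_univ_toList_eq_ncard [Fintype V] (P : Set V) :
    cnt (· ∈ P) Finset.univ.toList = P.ncard := by
  classical
  rw [cnt_eq_card_of_nodup _ _ (Finset.nodup_toList _), Finset.toList_toFinset,
    Set.ncard_eq_toFinset_card']
  congr 1
  ext x
  simp

section Core

variable (E T : V → V → Prop) (a b f : V)

/-- the "bad" vertices wrt the feed `f` -/
def Bad (u : V) : Prop := u ≠ f ∧ u ∉ Nplus E f ∧ u ∉ Nplusplus E f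

lemma engine
    (hET : ∀ x y, E x y → T x y)
    (hT : ∀ x y, T x y → ¬ T y x)
    (hcomp : ∀ x y, x ≠ y → ¬(x = a ∧ y = b) → ¬(x = b ∧ y = a) → T x y ∨ T y x)
    (h5 : ∀ g v u, E g v → T v u → ¬ E v u → u ≠ g → u ∈ Nplus E g ∪ Nplusplus E g)
    (hab : a ≠ b)
    (l p : List V) (x : V) (M : List V)
    (hl : l = p ++ x :: (M ++ [f]))
    (hnd : l.Nodup)
    (hmed : ∀ l', l'.Perm l → wt T l' ≤ wt T l)
    (hxK : x ∈ Nplus E f)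
    (hclaims : ∀ t : List V, t.IsSuffix (M ++ [f]) →
      cnt (· ∈ Nplus E f) t ≤ cnt (· ∈ Nplusplus E f) t)
    (hfail : cnt (· ∈ Nplusplus E f) (x :: (M ++ [f])) < cnt (· ∈ Nplus E f) (x :: (M ++ [f]))) :
    ∃ W u Z w, x :: M = W ++ u :: Z ∧ W ≠ [] ∧ Bad E f u ∧
      w ∈ W ∧ w ∈ Nplus E f ∧ ((w = a ∧ u = b) ∨ (w = b ∧ u = a)) ∧
      wt T (p ++ u :: (W ++ (Z ++ [f]))) = wt T l := by
  classical
  set K : V → Prop := (· ∈ Nplus E f) with hK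
  set S : V → Prop := (· ∈ Nplusplus E f) with hS
  -- basic facts
  have hdisjKS : ∀ v, ¬ (K v ∧ S v) := fun v ⟨h1, h2⟩ => h2.1 h1
  have hfK : ¬ K f := fun h => hT f f (hET f f h) (hET f f h)
  have hfS : ¬ S f := fun h => h.2.1 rfl
  have hfnotxM : f ∉ x :: M := by
    have : (x :: (M ++ [f])).Nodup := (List.nodup_append.mp (hl ▸ hnd)).2.1
    rw [show x :: (M ++ [f]) = (x :: M) ++ [f] by simp] at this
    intro hf
    exact ((List.nodup_append'.mp this).2.2) hf (List.mem_singleton.mpr rfl)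
  have hclassify : ∀ v, v ≠ f → ¬ Bad E f v → K v ∨ S v := by
    intro v hvf hvb
    by_cases h1 : K v
    · exact Or.inl h1
    by_cases h2 : S v
    · exact Or.inr h2
    exact absurd ⟨hvf, h1, h2⟩ hvb
  -- step 1 : kappa
  have h0 : cnt K (M ++ [f]) ≤ cnt S (M ++ [f]) := hclaims _ (List.suffix_refl _)
  have hxnS : ¬ S x := fun h => hdisjKS x ⟨hxK, h⟩
  have hc1 : cnt K (x :: (M ++ [f])) = cnt K (M ++ [f]) + 1 := cnt_cons_of K hxK _
  have hc2 : cnt S (x :: (M ++ [f])) = cnt S (M ++ [f]) := cnt_cons_of_not S hxnS _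
  have hkappa : cnt S (M ++ [f]) = cnt K (M ++ [f]) := by omega
  set κ := cnt K (M ++ [f]) with hκ
  have hKxM : cnt K (x :: M) = κ + 1 := by
    have : cnt K ((x :: M) ++ [f]) = cnt K (x :: M) + cnt K [f] := cnt_append K _ _
    have hf0 : cnt K [f] = 0 := cnt_cons_of_not K hfK []
    have he : (x :: M) ++ [f] = x :: (M ++ [f]) := by simp
    rw [he] at this
    omega
  have hSxM : cnt S (x :: M) = κ := by
    have : cnt S ((x :: M) ++ [f]) = cnt S (x :: M) + cnt S [f] := cnt_append S _ _
    have hf0 : cnt S [f] = 0 := cnt_cons_of_not S hfS []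
    have he : (x :: M) ++ [f] = x :: (M ++ [f]) := by simp
    rw [he] at this
    omega
  -- step 2 : feed move gives a bad vertex in x :: M
  have hfeed : cnt (fun v => T f v) (x :: M) ≤ cnt (fun v => T v f) (x :: M) := by
    have hmv := wt_move T p (x :: M) [] f
    have hlshape : l = p ++ (x :: M) ++ f :: [] := by rw [hl]; simp
    have hperm : (p ++ f :: ((x :: M) ++ [])).Perm l := by
      rw [hlshape]; exact (perm_move p (x :: M) [] f).symm
    have := hmed _ hperm
    rw [← hlshape] at hmv
    omega
  have hKle : cnt K (x :: M) ≤ cnt (fun v => T f v) (x :: M) :=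
    cnt_mono_of_imp _ (fun v _ hv => hET f v hv)
  have hTle : cnt (fun v => T v f) (x :: M) ≤ cnt (fun v => S v ∨ Bad E f v) (x :: M) := by
    refine cnt_mono_of_imp _ (fun v hv hTv => ?_)
    have hvf : v ≠ f := fun he => hfnotxM (he ▸ hv)
    have hvK : ¬ K v := fun hk => hT f v (hET f v hk) hTv
    by_cases hvb : Bad E f v
    · exact Or.inr hvb
    · rcases hclassify v hvf hvb with h | h
      · exact absurd h hvK
      · exact Or.inl h
  have hSB : cnt (fun v => S v ∨ Bad E f v) (x :: M) = cnt S (x :: M) + cnt (Bad E f) (x :: M) :=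
    cnt_or_disjoint _ (fun v ⟨h1, h2⟩ => h2.2.2 h1)
  have hbadpos : 0 < cnt (Bad E f) (x :: M) := by omega
  -- step 3 : first bad split
  obtain ⟨W, u, Z, hsplit, hub, hWnb⟩ := exists_first_split (cnt_pos_exists hbadpos)
  have hWne : W ≠ [] := by
    rintro rfl
    simp only [List.nil_append] at hsplit
    have : x = u := (List.cons.injEq _ _ _ _).mp hsplit |>.1
    exact hub.2.1 (this ▸ hxK)
  -- step 4 : counts on W
  have hsplit2 : x :: (M ++ [f]) = W ++ u :: (Z ++ [f]) := by
    have : (x :: M) ++ [f] = (W ++ u :: Z) ++ [f] := by rw [hsplit]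
    simpa using this
  have hMZ : M ++ [f] = (W.tail) ++ u :: (Z ++ [f]) := by
    obtain ⟨y, W₀, rfl⟩ : ∃ y W₀, W = y :: W₀ := by
      cases W with
      | nil => exact absurd rfl hWne
      | cons y W₀ => exact ⟨y, W₀, rfl⟩
    have := hsplit2
    rw [List.cons_append] at this
    exact ((List.cons.injEq _ _ _ _).mp this).2
  have hsufu : (u :: (Z ++ [f])).IsSuffix (M ++ [f]) := ⟨W.tail, hMZ.symm⟩
  have hq : cnt K (u :: (Z ++ [f])) ≤ cnt S (u :: (Z ++ [f])) := hclaims _ hsufu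
  have huK : ¬ K u := hub.2.1
  have huS : ¬ S u := hub.2.2
  have htotK : cnt K W + cnt K (u :: (Z ++ [f])) = κ + 1 := by
    have := cnt_append K W (u :: (Z ++ [f]))
    rw [← hsplit2] at this
    omega
  have htotS : cnt S W + cnt S (u :: (Z ++ [f])) = κ := by
    have := cnt_append S W (u :: (Z ++ [f]))
    rw [← hsplit2] at this
    omega
  have hscw : cnt S W + 1 ≤ cnt K W := by omega
  -- step 5 : u move
  have hlW : l = p ++ W ++ u :: (Z ++ [f]) := by
    rw [hl, hsplit2, List.append_assoc]
  have humove : cnt (fun v => T u v) W ≤ cnt (fun v => T v u) W := by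
    have hmv := wt_move T p W (Z ++ [f]) u
    have hperm : (p ++ u :: (W ++ (Z ++ [f]))).Perm l := by
      rw [hlW]; exact (perm_move p W (Z ++ [f]) u).symm
    have := hmed _ hperm
    rw [← hlW] at hmv
    omega
  have hfnotW : f ∉ W := fun hf => hfnotxM (hsplit ▸ List.mem_append_left _ hf)
  have hWKS : ∀ v ∈ W, K v ∨ S v := by
    intro v hv
    exact hclassify v (fun he => hfnotW (he ▸ hv)) (hWnb v hv)
  have hKnoTu : ∀ v ∈ W, K v → ¬ T v u := by
    intro v _ hvK hTvu
    by_cases hEvu : E v u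
    · exact huS ⟨huK, hub.1, v, hvK, hEvu⟩
    · have := h5 f v u hvK hTvu hEvu hub.1
      rcases this with h | h
      · exact huK h
      · exact huS h
  have hiWS : cnt (fun v => T v u) W ≤ cnt S W := by
    refine cnt_mono_of_imp _ (fun v hv hTv => ?_)
    rcases hWKS v hv with h | h
    · exact absurd hTv (hKnoTu v hv h)
    · exact h
  have hexw : ∃ w ∈ W, K w ∧ ¬ T u w := by
    by_contra hno
    push_neg at hno
    have : cnt K W ≤ cnt (fun v => T u v) W :=
      cnt_mono_of_imp _ (fun v hv hK => hno v hv hK)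
    omega
  obtain ⟨w, hwW, hwK, hnTuw⟩ := hexw
  have hwu : w ≠ u := fun he => huK (he ▸ hwK)
  have hpair : (w = a ∧ u = b) ∨ (w = b ∧ u = a) := by
    by_contra hnp
    have hn1 : ¬(w = a ∧ u = b) := fun h => hnp (Or.inl h)
    have hn2 : ¬(w = b ∧ u = a) := fun h => hnp (Or.inr h)
    rcases hcomp w u hwu hn1 hn2 with h | h
    · exact hKnoTu w hwW hwK h
    · exact hnTuw h
  -- tightness
  have hWnodup : W.Nodup := by
    have h1 : (x :: (M ++ [f])).Nodup := (List.nodup_append.mp (hl ▸ hnd)).2.1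
    rw [hsplit2] at h1
    exact (List.nodup_append.mp h1).1
  have hKW1 : cnt K W = cnt (fun v => K v ∧ v ≠ w) W + 1 := by
    have := cnt_split_mem (P := K) hWnodup hwW
    simpa [hwK] using this
  have hKwle : cnt (fun v => K v ∧ v ≠ w) W ≤ cnt (fun v => T u v) W := by
    refine cnt_mono_of_imp _ (fun v hv ⟨hvK, hvw⟩ => ?_)
    by_contra hnTuv
    have hnTvu : ¬ T v u := hKnoTu v hv hvK
    have hvu : v ≠ u := fun he => huK (he ▸ hvK)
    have hn1 : ¬(v = a ∧ u = b) := by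
      rintro ⟨rfl, rfl⟩
      rcases hpair with ⟨hwa, _⟩ | ⟨_, hua⟩
      · exact hvw hwa.symm
      · exact hab hua.symm
    have hn2 : ¬(v = b ∧ u = a) := by
      rintro ⟨rfl, rfl⟩
      rcases hpair with ⟨_, hub'⟩ | ⟨hwb, _⟩
      · exact hab hub'
      · exact hvw hwb.symm
    rcases hcomp v u hvu hn1 hn2 with h | h
    · exact hnTvu h
    · exact hnTuv h
  have heq : cnt (fun v => T u v) W = cnt (fun v => T v u) W := by omega
  -- weight equality
  have hwt : wt T (p ++ u :: (W ++ (Z ++ [f]))) = wt T l := by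
    have hmv := wt_move T p W (Z ++ [f]) u
    rw [← hlW] at hmv
    omega
  exact ⟨W, u, Z, w, hsplit, hWne, hub, hwW, hwK, hpair, hwt⟩


lemma suffix_extend {t B : List V} (A : List V) (h : t.IsSuffix B) : t.IsSuffix (A ++ B) :=
  h.trans (List.suffix_append A B)

lemma cnt_drop_mid {P : V → Prop} {u : V} (hu : ¬ P u) (A B : List V) :
    cnt P (A ++ u :: B) = cnt P (A ++ B) := by
  rw [cnt_append, cnt_append, cnt_cons_of_not P hu]

lemma getLast_of_eq_append {l p t : List V} (hne : l ≠ []) (ht : t ≠ []) (hp : p ++ t = l) :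
    l.getLast hne = t.getLast ht := by
  have h1 : l.getLast? = some (l.getLast hne) := List.getLast?_eq_getLast hne
  have h2 : t.getLast? = some (t.getLast ht) := List.getLast?_eq_getLast ht
  have h3 : l.getLast? = t.getLast? := by
    rw [← hp, List.getLast?_append, h2]
    simp
  rw [h3, h2] at h1
  exact (Option.some_injective _ h1).symm

lemma claims_all [Fintype V]
    (hET : ∀ x y, E x y → T x y)
    (hT : ∀ x y, T x y → ¬ T y x)
    (hcomp : ∀ x y, x ≠ y → ¬(x = a ∧ y = b) → ¬(x = b ∧ y = a) → T x y ∨ T y x)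
    (h5 : ∀ g v u, E g v → T v u → ¬ E v u → u ≠ g → u ∈ Nplus E g ∪ Nplusplus E g)
    (hab : a ≠ b)
    (l : List V) (hperm : l.Perm Finset.univ.toList)
    (hmed : ∀ l', l'.Perm l → wt T l' ≤ wt T l)
    (hne : l ≠ []) (hf : f = l.getLast hne) :
    ∀ t : List V, t.IsSuffix l → cnt (· ∈ Nplus E f) t ≤ cnt (· ∈ Nplusplus E f) t := by
  classical
  have hnd : l.Nodup := (hperm.nodup_iff).mpr (Finset.nodup_toList _)
  set K : V → Prop := (· ∈ Nplus E f) with hKdef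
  set S : V → Prop := (· ∈ Nplusplus E f) with hSdef
  suffices H : ∀ n, ∀ t : List V, t.length ≤ n → t.IsSuffix l → cnt K t ≤ cnt S t by
    intro t ht; exact H t.length t le_rfl ht
  intro n
  induction n with
  | zero =>
    intro t hlen _
    rw [List.length_eq_zero_iff.mp (Nat.le_zero.mp hlen)]
    exact le_refl _
  | succ n ihn =>
    intro t hlen hsuf
    cases t with
    | nil => exact le_refl _
    | cons x t' =>
      have ht'len : t'.length ≤ n := by simpa using hlen
      have ht'suf : t'.IsSuffix l := (List.suffix_cons x t').trans hsuf
      by_cases hxK : K x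
      · -- hard case
        by_contra hgt
        push_neg at hgt
        obtain ⟨p, hp⟩ := hsuf
        have ht'ne : t' ≠ [] := by
          rintro rfl
          have hx : l.getLast hne = x :=
            (getLast_of_eq_append hne (by simp) hp).trans (by simp)
          have hxf : x = f := by rw [hf, hx]
          subst hxf
          exact hT x x (hET x x hxK) (hET x x hxK)
        have hlast : t'.getLast ht'ne = f := by
          have h1 : l.getLast hne = (x :: t').getLast (by simp) :=
            getLast_of_eq_append hne (by simp) hp
          have h2 : (x :: t').getLast (by simp) = t'.getLast ht'ne := List.getLast_cons ht'ne
          rw [hf, h1, h2]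
        set M := t'.dropLast with hMdef
        have hMf : t' = M ++ [f] := by
          conv_lhs => rw [← List.dropLast_append_getLast ht'ne]
          rw [hlast]
        have hl : l = p ++ x :: (M ++ [f]) := by rw [← hp, hMf]
        have hclaims : ∀ s : List V, s.IsSuffix (M ++ [f]) → cnt K s ≤ cnt S s := by
          intro s hs
          rw [← hMf] at hs
          exact ihn s (le_trans hs.length_le ht'len) (hs.trans ht'suf)
        have hfail : cnt S (x :: (M ++ [f])) < cnt K (x :: (M ++ [f])) := by
          rw [← hMf]; exact hgt
        obtain ⟨W, u, Z, w, hsplit, hWne, hub, hwW, hwK, hpairWU, hwt⟩ :=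
          engine E T a b f hET hT hcomp h5 hab l p x M hl hnd hmed hxK hclaims hfail
        -- decompose W
        obtain ⟨x₀, W₀, rfl⟩ : ∃ x₀ W₀, W = x₀ :: W₀ := by
          cases W with
          | nil => exact absurd rfl hWne
          | cons y W₀ => exact ⟨y, W₀, rfl⟩
        have hxx₀ : x₀ = x := (List.cons.injEq _ _ _ _).mp hsplit.symm |>.1
        subst hxx₀
        have hM : M = W₀ ++ u :: Z := ((List.cons.injEq _ _ _ _).mp hsplit).2
        -- the moved list
        set l' := p ++ u :: ((x₀ :: W₀) ++ (Z ++ [f])) with hl'def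
        have hlW : l = p ++ (x₀ :: W₀) ++ u :: (Z ++ [f]) := by
          rw [hl, hM]; simp
        have hperm' : l'.Perm l := by
          rw [hlW, hl'def]
          exact (perm_move p (x₀ :: W₀) (Z ++ [f]) u).symm
        have hmed' : ∀ l'', l''.Perm l' → wt T l'' ≤ wt T l' := by
          intro l'' h
          have : wt T l' = wt T l := hwt
          rw [this]
          exact hmed l'' (h.trans hperm')
        have hnd' : l'.Nodup := hperm'.nodup_iff.mpr hnd
        have hl' : l' = (p ++ [u]) ++ x₀ :: ((W₀ ++ Z) ++ [f]) := by
          rw [hl'def]; simp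
        -- u not in K/S and counts
        have huK : ¬ K u := hub.2.1
        have huS : ¬ S u := hub.2.2
        have hMWZ : M ++ [f] = W₀ ++ u :: (Z ++ [f]) := by rw [hM]; simp
        have hclaims' : ∀ s : List V, s.IsSuffix ((W₀ ++ Z) ++ [f]) → cnt K s ≤ cnt S s := by
          intro s hs
          rw [List.append_assoc] at hs
          rcases suffix_append_cases hs with h | ⟨A', hA', hA'ne, rfl⟩
          · have : s.IsSuffix (M ++ [f]) := by
              rw [hMWZ]
              exact suffix_extend W₀ (h.trans (List.suffix_cons u (Z ++ [f])))
            exact hclaims s this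
          · have hs₀ : (A' ++ u :: (Z ++ [f])).IsSuffix (M ++ [f]) := by
              rw [hMWZ]
              obtain ⟨pw, hpw⟩ := hA'
              exact ⟨pw, by rw [← List.append_assoc, hpw]⟩
            have hcl := hclaims _ hs₀
            have e1 : cnt K (A' ++ u :: (Z ++ [f])) = cnt K (A' ++ (Z ++ [f])) := by
              rw [cnt_append, cnt_append, cnt_cons_of_not K huK]
            have e2 : cnt S (A' ++ u :: (Z ++ [f])) = cnt S (A' ++ (Z ++ [f])) := by
              rw [cnt_append, cnt_append, cnt_cons_of_not S huS]
            rw [e1, e2] at hcl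
            exact hcl
        have hfail' : cnt S (x₀ :: ((W₀ ++ Z) ++ [f])) < cnt K (x₀ :: ((W₀ ++ Z) ++ [f])) := by
          have e1 : cnt K (x₀ :: (M ++ [f])) = cnt K (x₀ :: ((W₀ ++ Z) ++ [f])) := by
            rw [hMWZ, cnt_cons K, cnt_cons K, List.append_assoc, cnt_drop_mid huK]
          have e2 : cnt S (x₀ :: (M ++ [f])) = cnt S (x₀ :: ((W₀ ++ Z) ++ [f])) := by
            rw [hMWZ, cnt_cons S, cnt_cons S, List.append_assoc, cnt_drop_mid huS]
          rw [← e1, ← e2, ← hMf]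
          exact hgt
        obtain ⟨W', u', Z', w', hsplit', _, hub', hw'W', hw'K, hpair', _⟩ :=
          engine E T a b f hET hT hcomp h5 hab l' (p ++ [u]) x₀ (W₀ ++ Z) hl' hnd' hmed'
            hxK hclaims' hfail'
        -- u ∉ x₀ :: (W₀ ++ Z)
        have hunotin : u ∉ x₀ :: (W₀ ++ Z) := by
          have h1 : ((x₀ :: W₀) ++ u :: (Z ++ [f])).Nodup := by
            rw [hlW] at hnd
            rw [List.append_assoc] at hnd
            exact (List.nodup_append.mp hnd).2.1
          rw [List.nodup_append'] at h1
          intro hmem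
          rcases List.mem_cons.mp hmem with rfl | hmem'
          · exact h1.2.2 List.mem_cons_self List.mem_cons_self
          · rcases List.mem_append.mp hmem' with h | h
            · exact h1.2.2 (List.mem_cons_of_mem _ h) List.mem_cons_self
            · exact (List.nodup_cons.mp h1.2.1).1 (List.mem_append_left _ h)
        have hu'mem : u' ∈ x₀ :: (W₀ ++ Z) := by
          rw [hsplit']
          exact List.mem_append_right _ List.mem_cons_self
        have huu' : u' ≠ u := fun he => hunotin (he ▸ hu'mem)
        have hu'K : ¬ K u' := hub'.2.1
        rcases hpairWU with ⟨hwa, hubb⟩ | ⟨hwb, hua⟩ <;>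
          rcases hpair' with ⟨hw'a, hu'b⟩ | ⟨hw'b, hu'a⟩
        · exact huu' (hu'b.trans hubb.symm)
        · exact hu'K (show K u' by rw [hu'a, ← hwa]; exact hwK)
        · exact hu'K (show K u' by rw [hu'b, ← hwb]; exact hwK)
        · exact huu' (hu'a.trans hua.symm)
      · -- easy case
        have h1 : cnt K (x :: t') = cnt K t' := cnt_cons_of_not K hxK t'
        have h2 : cnt S t' ≤ cnt S (x :: t') := by rw [cnt_cons S]; omega
        have := ihn t' ht'len ht'suf
        omega


theorem core_snp [Fintype V] [Nonempty V]
    (hET : ∀ x y, E x y → T x y)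
    (hT : ∀ x y, T x y → ¬ T y x)
    (hcomp : ∀ x y, x ≠ y → ¬(x = a ∧ y = b) → ¬(x = b ∧ y = a) → T x y ∨ T y x)
    (h5 : ∀ g v u, E g v → T v u → ¬ E v u → u ≠ g → u ∈ Nplus E g ∪ Nplusplus E g)
    (hab : a ≠ b) :
    ∃ f : V, (Nplus E f).ncard ≤ (Nplusplus E f).ncard := by
  classical
  obtain ⟨l, hperm, hmed⟩ := exists_median T
  have hlen : l.length = Fintype.card V := by
    rw [hperm.length_eq, Finset.length_toList, Finset.card_univ]
  have hne : l ≠ [] := by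
    intro h
    rw [h] at hlen
    have := Fintype.card_pos (α := V)
    simp at hlen
    omega
  have hcl := claims_all E T a b (l.getLast hne) hET hT hcomp h5 hab l hperm hmed hne rfl
    l (List.suffix_refl l)
  refine ⟨l.getLast hne, ?_⟩
  have h1 : cnt (· ∈ Nplus E (l.getLast hne)) l = (Nplus E (l.getLast hne)).ncard := by
    rw [cnt_perm _ hperm, cnt_univ_toList_eq_ncard]
  have h2 : cnt (· ∈ Nplusplus E (l.getLast hne)) l = (Nplusplus E (l.getLast hne)).ncard := by
    rw [cnt_perm _ hperm, cnt_univ_toList_eq_ncard]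
  rw [← h1, ← h2]
  exact hcl

end Core

section Inst

/-- the good-orientation predicate: every in-neighbour of `x` reaches `y` within two steps -/
def OkOr {V : Type*} (E : V → V → Prop) (x y : V) : Prop :=
  ∀ v, v ≠ x → v ≠ y → E v x → y ∈ Nplus E v ∪ Nplusplus E v

variable (E : V → V → Prop) (a b c d : V)

lemma inst_core [Fintype V]
    (hasym : ∀ x y, E x y → ¬ E y x)
    (hab : a ≠ b)
    (p q r s : V)
    (hmpq : IsMissingEdge E p q) (hmrs : IsMissingEdge E r s)
    (okpq : OkOr E p q) (okrs : OkOr E r s)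
    (hne1 : ¬(q = r ∧ p = s))
    (hclass : ∀ x y, IsMissingEdge E x y →
      (x = a ∧ y = b) ∨ (x = b ∧ y = a) ∨ (x = p ∧ y = q) ∨ (x = q ∧ y = p) ∨
      (x = r ∧ y = s) ∨ (x = s ∧ y = r)) :
    ∃ f : V, (Nplus E f).ncard ≤ (Nplusplus E f).ncard := by
  classical
  have hirr : ∀ x, ¬ E x x := fun x hx => hasym x x hx hx
  set T : V → V → Prop := fun x y => E x y ∨ (x = p ∧ y = q) ∨ (x = r ∧ y = s) with hTdef
  have hET : ∀ x y, E x y → T x y := fun x y h => Or.inl h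
  have hT : ∀ x y, T x y → ¬ T y x := by
    intro x y hxy hyx
    rcases hxy with h | ⟨hx, hy⟩ | ⟨hx, hy⟩ <;>
      rcases hyx with h' | ⟨hy', hx'⟩ | ⟨hy', hx'⟩
    · exact hasym _ _ h h'
    · rw [hy', hx'] at h; exact hmpq.2.2 h
    · rw [hy', hx'] at h; exact hmrs.2.2 h
    · rw [hy, hx] at h'; exact hmpq.2.2 h'
    · exact hmpq.1 (hx'.symm.trans hx).symm
    · exact hne1 ⟨hy.symm.trans hy', hx.symm.trans hx'⟩
    · rw [hy, hx] at h'; exact hmrs.2.2 h'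
    · exact hne1 ⟨hx'.symm.trans hx, hy'.symm.trans hy⟩
    · exact hmrs.1 (hx'.symm.trans hx).symm
  have hcomp : ∀ x y, x ≠ y → ¬(x = a ∧ y = b) → ¬(x = b ∧ y = a) → T x y ∨ T y x := by
    intro x y hxy hn1 hn2
    by_cases hE1 : E x y
    · exact Or.inl (Or.inl hE1)
    by_cases hE2 : E y x
    · exact Or.inr (Or.inl hE2)
    rcases hclass x y ⟨hxy, hE1, hE2⟩ with h | h | h | h | h | h
    · exact absurd h hn1
    · exact absurd h hn2
    · exact Or.inl (Or.inr (Or.inl h))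
    · exact Or.inr (Or.inr (Or.inl ⟨h.2, h.1⟩))
    · exact Or.inl (Or.inr (Or.inr h))
    · exact Or.inr (Or.inr (Or.inr ⟨h.2, h.1⟩))
  have h5 : ∀ g v u, E g v → T v u → ¬ E v u → u ≠ g → u ∈ Nplus E g ∪ Nplusplus E g := by
    intro g v u hgv hTvu hnvu _
    rcases hTvu with h | ⟨hv, hu⟩ | ⟨hv, hu⟩
    · exact absurd h hnvu
    · rw [hv] at hgv
      rw [hu]
      exact okpq g (fun he => hirr p (he ▸ hgv)) (fun he => hmpq.2.2 (he ▸ hgv)) hgv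
    · rw [hv] at hgv
      rw [hu]
      exact okrs g (fun he => hirr r (he ▸ hgv)) (fun he => hmrs.2.2 (he ▸ hgv)) hgv
  have : Nonempty V := ⟨a⟩
  exact core_snp E T a b hET hT hcomp h5 hab


/-- every missing edge has an endpoint in `{b, c}`, so `bc` is good -/
lemma good_bc
    (hclass : ∀ x y, IsMissingEdge E x y →
      (x = a ∧ y = b) ∨ (x = b ∧ y = a) ∨ (x = b ∧ y = c) ∨ (x = c ∧ y = b) ∨
      (x = c ∧ y = d) ∨ (x = d ∧ y = c)) :
    OkOr E b c ∨ OkOr E c b := by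
  classical
  by_contra hng
  push_neg at hng
  obtain ⟨h1, h2⟩ := hng
  rw [OkOr] at h1 h2
  push_neg at h1 h2
  obtain ⟨v₁, hv₁b, hv₁c, hv₁E, hv₁n⟩ := h1
  obtain ⟨v₂, hv₂c, hv₂b, hv₂E, hv₂n⟩ := h2
  -- v₁ → b with c unreachable ; v₂ → c with b unreachable
  have hnE12 : ¬ E v₁ v₂ := by
    intro h
    apply hv₁n
    right
    refine ⟨fun hc => hv₁n (Or.inl hc), hv₁c.symm, v₂, h, hv₂E⟩
  have hnE21 : ¬ E v₂ v₁ := by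
    intro h
    apply hv₂n
    right
    refine ⟨fun hc => hv₂n (Or.inl hc), hv₂b.symm, v₁, h, hv₁E⟩
  have hne12 : v₁ ≠ v₂ := by
    rintro rfl
    exact hv₁n (Or.inl hv₂E)
  rcases hclass v₁ v₂ ⟨hne12, hnE12, hnE21⟩ with h | h | h | h | h | h
  · exact hv₂b h.2
  · exact hv₁b h.1
  · exact hv₁b h.1
  · exact hv₁c h.1
  · exact hv₁c h.1
  · exact hv₂c h.2

lemma good_ab_or_cd
    (hasym : ∀ x y, E x y → ¬ E y x)
    (hmbc : IsMissingEdge E b c)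
    (hclass : ∀ x y, IsMissingEdge E x y →
      (x = a ∧ y = b) ∨ (x = b ∧ y = a) ∨ (x = b ∧ y = c) ∨ (x = c ∧ y = b) ∨
      (x = c ∧ y = d) ∨ (x = d ∧ y = c)) :
    (OkOr E a b ∨ OkOr E b a) ∨ (OkOr E c d ∨ OkOr E d c) := by
  classical
  by_contra hng
  push_neg at hng
  obtain ⟨⟨h1, h2⟩, h3, h4⟩ := hng
  rw [OkOr] at h1 h2 h3 h4
  push_neg at h1 h2 h3 h4
  obtain ⟨v₁, hv₁a, hv₁b, hv₁E, hv₁n⟩ := h1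
  obtain ⟨v₂, hv₂b, hv₂a, hv₂E, hv₂n⟩ := h2
  obtain ⟨u₁, hu₁c, hu₁d, hu₁E, hu₁n⟩ := h3
  obtain ⟨u₂, hu₂d, hu₂c, hu₂E, hu₂n⟩ := h4
  -- v pair
  have hnE12 : ¬ E v₁ v₂ := fun h =>
    hv₁n (Or.inr ⟨fun hc => hv₁n (Or.inl hc), hv₁b.symm, v₂, h, hv₂E⟩)
  have hnE21 : ¬ E v₂ v₁ := fun h =>
    hv₂n (Or.inr ⟨fun hc => hv₂n (Or.inl hc), hv₂a.symm, v₁, h, hv₁E⟩)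
  have hne12 : v₁ ≠ v₂ := by rintro rfl; exact hv₁n (Or.inl hv₂E)
  have hv₁c : v₁ = c ∧ v₂ = d := by
    rcases hclass v₁ v₂ ⟨hne12, hnE12, hnE21⟩ with h | h | h | h | h | h
    · exact absurd h.1 hv₁a
    · exact absurd h.1 hv₁b
    · exact absurd h.1 hv₁b
    · -- v₁ = c, v₂ = b impossible : E v₂ b would be E b b
      exact absurd (h.2 ▸ hv₂E) (fun he => hasym b b he he)
    · exact h
    · -- v₁ = d, v₂ = c : E v₂ b = E c b contradicts bc missing
      exact absurd (h.2 ▸ hv₂E) hmbc.2.2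
  -- u pair
  have hnE34 : ¬ E u₁ u₂ := fun h =>
    hu₁n (Or.inr ⟨fun hc => hu₁n (Or.inl hc), hu₁d.symm, u₂, h, hu₂E⟩)
  have hnE43 : ¬ E u₂ u₁ := fun h =>
    hu₂n (Or.inr ⟨fun hc => hu₂n (Or.inl hc), hu₂c.symm, u₁, h, hu₁E⟩)
  have hne34 : u₁ ≠ u₂ := by rintro rfl; exact hu₁n (Or.inl hu₂E)
  have hu₁a : u₁ = a := by
    rcases hclass u₁ u₂ ⟨hne34, hnE34, hnE43⟩ with h | h | h | h | h | h
    · exact h.1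
    · -- u₁ = b : E u₁ c = E b c contradicts bc missing
      exact absurd (h.1 ▸ hu₁E) hmbc.2.1
    · exact absurd h.1 (by
        rintro rfl
        exact hmbc.2.1 (hu₁E))
    · exact absurd h.1 hu₁c
    · exact absurd h.1 hu₁c
    · exact absurd h.1 hu₁d
  -- contradiction : E c a and E a c
  exact hasym a c (hu₁a ▸ hu₁E) (hv₁c.1 ▸ hv₁E)

section OrHelp
variable {A₁ A₂ A₃ A₄ A₅ A₆ : Prop}
lemma or6_swap56 (h : A₁ ∨ A₂ ∨ A₃ ∨ A₄ ∨ A₅ ∨ A₆) : A₁ ∨ A₂ ∨ A₃ ∨ A₄ ∨ A₆ ∨ A₅ := by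
  rcases h with h|h|h|h|h|h
  exacts [Or.inl h, Or.inr (Or.inl h), Or.inr (Or.inr (Or.inl h)),
    Or.inr (Or.inr (Or.inr (Or.inl h))),
    Or.inr (Or.inr (Or.inr (Or.inr (Or.inr h)))),
    Or.inr (Or.inr (Or.inr (Or.inr (Or.inl h))))]
lemma or6_swap34 (h : A₁ ∨ A₂ ∨ A₃ ∨ A₄ ∨ A₅ ∨ A₆) : A₁ ∨ A₂ ∨ A₄ ∨ A₃ ∨ A₅ ∨ A₆ := by
  rcases h with h|h|h|h|h|h
  exacts [Or.inl h, Or.inr (Or.inl h), Or.inr (Or.inr (Or.inr (Or.inl h))),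
    Or.inr (Or.inr (Or.inl h)),
    Or.inr (Or.inr (Or.inr (Or.inr (Or.inl h)))),
    Or.inr (Or.inr (Or.inr (Or.inr (Or.inr h))))]
lemma or6_rev (h : A₁ ∨ A₂ ∨ A₃ ∨ A₄ ∨ A₅ ∨ A₆) : A₆ ∨ A₅ ∨ A₄ ∨ A₃ ∨ A₂ ∨ A₁ := by
  rcases h with h|h|h|h|h|h
  exacts [Or.inr (Or.inr (Or.inr (Or.inr (Or.inr h)))),
    Or.inr (Or.inr (Or.inr (Or.inr (Or.inl h)))),
    Or.inr (Or.inr (Or.inr (Or.inl h))),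
    Or.inr (Or.inr (Or.inl h)), Or.inr (Or.inl h), Or.inl h]
end OrHelp

lemma main_good [Fintype V]
    (hasym : ∀ x y, E x y → ¬ E y x)
    (hab : a ≠ b) (hbc : b ≠ c) (hbd : b ≠ d) (hcd : c ≠ d)
    (hmbc : IsMissingEdge E b c) (hmcd : IsMissingEdge E c d)
    (hclass : ∀ x y, IsMissingEdge E x y →
      (x = a ∧ y = b) ∨ (x = b ∧ y = a) ∨ (x = b ∧ y = c) ∨ (x = c ∧ y = b) ∨
      (x = c ∧ y = d) ∨ (x = d ∧ y = c))
    (hgbc : OkOr E b c ∨ OkOr E c b) (hgcd : OkOr E c d ∨ OkOr E d c) :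
    ∃ f : V, (Nplus E f).ncard ≤ (Nplusplus E f).ncard := by
  have hsymm : ∀ {x y : V}, IsMissingEdge E x y → IsMissingEdge E y x :=
    fun h => ⟨h.1.symm, h.2.2, h.2.1⟩
  rcases hgbc with ok1 | ok1 <;> rcases hgcd with ok2 | ok2
  · exact inst_core E a b hasym hab b c c d hmbc hmcd ok1 ok2 (fun h => hbd h.2) hclass
  · exact inst_core E a b hasym hab b c d c hmbc (hsymm hmcd) ok1 ok2 (fun h => hcd h.1)
      (fun x y hm => or6_swap56 (hclass x y hm))
  · exact inst_core E a b hasym hab c b c d (hsymm hmbc) hmcd ok1 ok2 (fun h => hbc h.1)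
      (fun x y hm => or6_swap34 (hclass x y hm))
  · exact inst_core E a b hasym hab c b d c (hsymm hmbc) (hsymm hmcd) ok1 ok2 (fun h => hbd h.1)
      (fun x y hm => or6_swap34 (or6_swap56 (hclass x y hm)))

end Inst
end SNPProof

/-- every finite digraph whose missing graph is a path with 3
edges has a vertex with the second neighborhood property. -/
theorem snp_of_missing_P3 {V : Type*} [Fintype V]
    (E : V → V → Prop)
    (hasym : ∀ x y : V, E x y → ¬ E y x)
    (hP3 : ∃ a b c d : V, [a, b, c, d].Pairwise (· ≠ ·) ∧
      ∀ u v : V, IsMissingEdge E u v ↔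
        s(u, v) ∈ ({s(a, b), s(b, c), s(c, d)} : Set (Sym2 V))) :
    ∃ v : V, HasSNP E v := by
  classical
  obtain ⟨a, b, c, d, hpw, hmiss⟩ := hP3
  have hds : a ≠ b ∧ (a ≠ c ∧ a ≠ d) ∧ b ≠ c ∧ b ≠ d ∧ c ≠ d := by
    simp only [List.pairwise_cons, List.mem_cons, List.mem_singleton, List.not_mem_nil,
      List.Pairwise.nil, and_true] at hpw
    refine ⟨hpw.1 b (by tauto), ⟨hpw.1 c (by tauto), hpw.1 d (by tauto)⟩, ?_, ?_, ?_⟩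
    · exact hpw.2.1 c (by tauto)
    · exact hpw.2.1 d (by tauto)
    · exact hpw.2.2.1 d (by tauto)
  obtain ⟨hab, ⟨hac, had⟩, hbc, hbd, hcd⟩ := hds
  have hclass : ∀ x y, IsMissingEdge E x y →
      (x = a ∧ y = b) ∨ (x = b ∧ y = a) ∨ (x = b ∧ y = c) ∨ (x = c ∧ y = b) ∨
      (x = c ∧ y = d) ∨ (x = d ∧ y = c) := by
    intro x y hm
    have h := (hmiss x y).mp hm
    simp only [Set.mem_insert_iff, Set.mem_singleton_iff, Sym2.eq_iff] at h
    tauto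
  have hmab : IsMissingEdge E a b := (hmiss a b).mpr (by left; rfl)
  have hmbc : IsMissingEdge E b c := (hmiss b c).mpr (by right; left; rfl)
  have hmcd : IsMissingEdge E c d := (hmiss c d).mpr (by right; right; rfl)
  have hgbc := SNPProof.good_bc E a b c d hclass
  rcases SNPProof.good_ab_or_cd E a b c d hasym hmbc hclass with hgab | hgcd
  · have hclass' : ∀ x y, IsMissingEdge E x y →
        (x = d ∧ y = c) ∨ (x = c ∧ y = d) ∨ (x = c ∧ y = b) ∨ (x = b ∧ y = c) ∨
        (x = b ∧ y = a) ∨ (x = a ∧ y = b) :=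
      fun x y hm => SNPProof.or6_rev (hclass x y hm)
    have hsymm : ∀ {x y : V}, IsMissingEdge E x y → IsMissingEdge E y x :=
      fun h => ⟨h.1.symm, h.2.2, h.2.1⟩
    exact SNPProof.main_good E d c b a hasym hcd.symm hbc.symm hac.symm hab.symm
      (hsymm hmbc) (hsymm hmab) hclass' hgbc.symm hgab.symm
  · exact SNPProof.main_good E a b c d hasym hab hbc hbd hcd hmbc hmcd hclass hgbc hgcd
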